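/- For every rooted forest M, the subspace H_≤M of H* is finite-dimensional (its dimension is at most the number of admissible cuts of M) and is stable under the top-elimination operator E^top_A for every rooted forest A: E^top_A(H_≤M) ⊆ H_≤M. Hence H_≤M is a finite-dimensional representation of n_T under top elimination T·φ := E^top_T φ. -/
import Mathlib


open scoped Classical

/-- Concrete (labeled) rooted trees: a root with a list of subtrees. -/
inductive RTree : Type
  | node : List RTree → RTree

/-- Shapes of admissible cuts: at each tree, either the full cut
(everything, including the root, goes to the pruned part `P`), or a choice of
an admissible cut of each child subtree.  A `full` occurring strictly inside
corresponds to cutting the edge above that vertex. -/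
inductive CutShape : Type
  | full
  | branch : List CutShape → CutShape

namespace CK

/-- Number of vertices of a forest. -/
def sizeL : List RTree → ℕ
  | [] => 0
  | .node l :: ts => 1 + sizeL l + sizeL ts

/-- All admissible cuts of a forest (a choice of admissible cut of each tree). -/
def cutsF : List RTree → List (List CutShape)
  | [] => [[]]
  | .node l :: ts =>
      (CutShape.full :: (cutsF l).map CutShape.branch).flatMap
        fun c => (cutsF ts).map (c :: ·)

/-- The root part `R_C(F)` of a cut. -/
def Rcut : List RTree → List CutShape → List RTree
  | [], _ => []
  | _ :: _, [] => []
  | .node _ :: ts, .full :: cs => Rcut ts cs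
  | .node l :: ts, .branch ds :: cs => RTree.node (Rcut l ds) :: Rcut ts cs

/-- The pruned part `P_C(F)` of a cut. -/
def Pcut : List RTree → List CutShape → List RTree
  | [], _ => []
  | _ :: _, [] => []
  | .node l :: ts, .full :: cs => RTree.node l :: Pcut ts cs
  | .node l :: ts, .branch ds :: cs => Pcut l ds ++ Pcut ts cs

/-- Number of `full`s occurring in a cut. -/
def fullsL : List CutShape → ℕ
  | [] => 0
  | .full :: cs => 1 + fullsL cs
  | .branch ds :: cs => fullsL ds + fullsL cs

/-- A list of concrete forests containing (representatives of) every forest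
with at most `n` vertices. -/
def forestsUpTo : ℕ → List (List RTree)
  | 0 => [[]]
  | n+1 => [] :: (forestsUpTo n).flatMap fun l => (forestsUpTo n).map fun F => RTree.node l :: F

/-- Isomorphism of rooted trees (non-planar): a root-preserving bijection, i.e.
the lists of subtrees agree up to permutation and isomorphism. -/
inductive Iso : RTree → RTree → Prop
  | node {l₁ l l₂ : List RTree} : List.Forall₂ Iso l₁ l → l.Perm l₂ → Iso (.node l₁) (.node l₂)

/-- Isomorphism classes of rooted trees. -/
abbrev TreeClass : Type := Quot Iso

/-- Isomorphism classes of rooted forests = multisets of tree classes.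
The empty forest is `0`. -/
abbrev ForestClass : Type := Multiset TreeClass

/-- Isomorphism class of a tree. -/
def clT (t : RTree) : TreeClass := Quot.mk _ t

/-- Isomorphism class of a forest. -/
def clF (F : List RTree) : ForestClass := (F.map clT : List TreeClass)

/-- A concrete representative of a forest class. -/
noncomputable def repF (M : ForestClass) : List RTree := M.toList.map Quot.out

/-- A concrete representative of a tree class. -/
noncomputable def repT (T : TreeClass) : RTree := T.out

/-- Number of vertices of a forest class. -/
noncomputable def sizeC (M : ForestClass) : ℕ := sizeL (repF M)

/-- Number of vertices of a tree class. -/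
noncomputable def sizeT (T : TreeClass) : ℕ := sizeL [repT T]

/-- The Hall algebra `H`: finitely supported ℚ-valued functions on
isomorphism classes of rooted forests, with basis the delta functions. -/
abbrev H : Type := ForestClass →₀ ℚ

/-- The basis element `δ_A` of `H`. -/
noncomputable def delta (A : ForestClass) : H := Finsupp.single A 1

/-- `n(A,B;M)`: the number of admissible cuts `C` of `M` with
`P_C(M) ≅ A` and `R_C(M) ≅ B`. -/
noncomputable def nCuts (A B M : ForestClass) : ℕ :=
  (cutsF (repF M)).countP fun c =>
    decide (clF (Pcut (repF M) c) = A ∧ clF (Rcut (repF M) c) = B)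

/-- A finite set of forest classes containing all classes with at most `n`
vertices. -/
noncomputable def forestCand (n : ℕ) : Finset ForestClass :=
  ((forestsUpTo n).map clF).toFinset

/-- A finite set of tree classes containing all classes with at most `n+1`
vertices. -/
noncomputable def treeCand (n : ℕ) : Finset TreeClass :=
  ((forestsUpTo n).map fun F => clT (RTree.node F)).toFinset

/-- The Hall product on basis elements: `δ_A × δ_B = Σ_M n(A,B;M)·δ_M`
(every `M` with `n(A,B;M) ≠ 0` has exactly `sizeC A + sizeC B` vertices). -/
noncomputable def mulBasis (A B : ForestClass) : H :=
  ∑ M ∈ forestCand (sizeC A + sizeC B), (nCuts A B M : ℚ) • delta M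

/-- The Hall product on `H`, extended bilinearly from basis elements. -/
noncomputable def hmul (f g : H) : H :=
  f.sum fun A a => g.sum fun B b => (a * b) • mulBasis A B

/-- The Connes-Kreimer Lie algebra `n_T` (as a vector space): the span of
isomorphism classes of rooted trees. -/
abbrev nT : Type := TreeClass →₀ ℚ

/-- The basis element of `n_T` corresponding to a rooted tree `T`. -/
noncomputable def tau (T : TreeClass) : nT := Finsupp.single T 1

/-- `a(T₁,T₂;T)`: the number of edges `e` of `T` such that the single-edge cut
at `e` has pruned part `≅ T₁` and root part `≅ T₂`. -/
noncomputable def aCount (T₁ T₂ T : TreeClass) : ℕ :=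
  (cutsF [repT T]).countP fun c =>
    decide (fullsL c = 1 ∧ clF (Pcut [repT T] c) = ({T₁} : Multiset TreeClass)
      ∧ clF (Rcut [repT T] c) = ({T₂} : Multiset TreeClass))

/-- The grafting (pre-Lie) product on basis elements:
`T₁ * T₂ = Σ_T a(T₁,T₂;T)·T`. -/
noncomputable def graftBasis (T₁ T₂ : TreeClass) : nT :=
  ∑ T ∈ treeCand (sizeT T₁ + sizeT T₂), (aCount T₁ T₂ T : ℚ) • tau T

/-- The grafting (pre-Lie) product on `n_T`, extended bilinearly. -/
noncomputable def graft (x y : nT) : nT :=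
  x.sum fun T₁ a => y.sum fun T₂ b => (a * b) • graftBasis T₁ T₂

/-- The Connes-Kreimer bracket `[x,y] = x*y - y*x` on `n_T`. -/
noncomputable def ckBracket (x y : nT) : nT := graft x y - graft y x

/-- `Ẽ_A δ_B = Σ_C δ_{R_C(B)}`, the sum over admissible cuts `C` of `B` with
`P_C(B) ≅ A`. -/
noncomputable def elimBasis (A B : ForestClass) : H :=
  (((cutsF (repF B)).filter fun c => decide (clF (Pcut (repF B) c) = A)).map
    fun c => delta (clF (Rcut (repF B) c))).sum

/-- The elimination operator `E_A` (here on `H ≅ H*`, identifying `φ_B` with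
`δ_B`). -/
noncomputable def elim (A : ForestClass) : H →ₗ[ℚ] H :=
  Finsupp.lsum ℚ fun B => LinearMap.toSpanSingleton ℚ H (elimBasis A B)

/-- `Ẽ^top_A δ_B = Σ_C δ_{P_C(B)}`, the sum over admissible cuts `C` of `B`
with `R_C(B) ≅ A`. -/
noncomputable def topElimBasis (A B : ForestClass) : H :=
  (((cutsF (repF B)).filter fun c => decide (clF (Rcut (repF B) c) = A)).map
    fun c => delta (clF (Pcut (repF B) c))).sum

/-- The top-elimination operator `E^top_A`. -/
noncomputable def topElim (A : ForestClass) : H →ₗ[ℚ] H :=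
  Finsupp.lsum ℚ fun B => LinearMap.toSpanSingleton ℚ H (topElimBasis A B)

/-- `H ⊗ H`, realized as finitely supported functions on pairs of classes. -/
abbrev H2 : Type := (ForestClass × ForestClass) →₀ ℚ

/-- `Δ(δ_M) = Σ δ_A ⊗ δ_B`, the sum over ordered pairs `(A,B)` of classes with
`A ⊔ B ≅ M`. -/
noncomputable def deltaBasis (M : ForestClass) : H2 :=
  ∑ A ∈ M.powerset.toFinset, Finsupp.single (A, M - A) 1

/-- The coproduct `Δ : H → H ⊗ H`. -/
noncomputable def coprod : H →ₗ[ℚ] H2 :=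
  Finsupp.lsum ℚ fun M => LinearMap.toSpanSingleton ℚ H2 (deltaBasis M)

/-- `H_≤M`: the subspace of `H* ≅ H` spanned by
`{φ_{P_C(M)} : C an admissible cut of M}` (the subobjects of `M`). -/
noncomputable def Hle (M : ForestClass) : Submodule ℚ H :=
  Submodule.span ℚ
    {v : H | ∃ c ∈ cutsF (repF M), v = delta (clF (Pcut (repF M) c))}

/-! ### Auxiliary lemmas -/

lemma Pcut_nil (c : List CutShape) : Pcut [] c = [] := by simp [Pcut]

lemma Pcut_full (l ts : List RTree) (cs : List CutShape) :
    Pcut (RTree.node l :: ts) (CutShape.full :: cs) = RTree.node l :: Pcut ts cs := by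
  simp [Pcut]

lemma Pcut_branch (l ts : List RTree) (ds cs : List CutShape) :
    Pcut (RTree.node l :: ts) (CutShape.branch ds :: cs) = Pcut l ds ++ Pcut ts cs := by
  simp [Pcut]

lemma sizeL_nil : sizeL [] = 0 := by simp [sizeL]

lemma sizeL_cons (l ts : List RTree) :
    sizeL (RTree.node l :: ts) = 1 + sizeL l + sizeL ts := by simp [sizeL]

lemma cutsF_nil : cutsF ([] : List RTree) = [[]] := by simp [cutsF]

lemma mem_cutsF_nil {c : List CutShape} : c ∈ cutsF ([] : List RTree) ↔ c = [] := by
  simp [cutsF_nil]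

lemma mem_cutsF_cons {l ts : List RTree} {c : List CutShape} :
    c ∈ cutsF (RTree.node l :: ts) ↔
      ∃ c0 cs, c = c0 :: cs ∧
        (c0 = CutShape.full ∨ ∃ ds ∈ cutsF l, c0 = CutShape.branch ds) ∧ cs ∈ cutsF ts := by
  rw [show cutsF (RTree.node l :: ts) =
      (CutShape.full :: (cutsF l).map CutShape.branch).flatMap
        (fun c => (cutsF ts).map (c :: ·)) from by simp [cutsF]]
  simp only [List.mem_flatMap, List.mem_map, List.mem_cons]
  constructor
  · rintro ⟨c0, hc0, cs, hcs, rfl⟩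
    refine ⟨c0, cs, rfl, ?_, hcs⟩
    rcases hc0 with h | ⟨ds, hds, rfl⟩
    · exact Or.inl h
    · exact Or.inr ⟨ds, hds, rfl⟩
  · rintro ⟨c0, cs, rfl, h, hcs⟩
    refine ⟨c0, ?_, cs, hcs, rfl⟩
    rcases h with rfl | ⟨ds, hds, rfl⟩
    · exact Or.inl rfl
    · exact Or.inr ⟨ds, hds, rfl⟩

lemma length_of_mem_cutsF : ∀ {F : List RTree} {c : List CutShape},
    c ∈ cutsF F → c.length = F.length := by
  intro F
  induction F with
  | nil =>
    intro c hc
    rw [mem_cutsF_nil.mp hc]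
    rfl
  | cons t ts ih =>
    obtain ⟨l⟩ := t
    intro c hc
    obtain ⟨c0, cs, rfl, _, hcs⟩ := mem_cutsF_cons.mp hc
    simp [ih hcs]

lemma mem_cutsF_append : ∀ {X : List RTree} (Y : List RTree) {c : List CutShape},
    c ∈ cutsF (X ++ Y) ↔ ∃ c1 ∈ cutsF X, ∃ c2 ∈ cutsF Y, c = c1 ++ c2 := by
  intro X
  induction X with
  | nil =>
    intro Y c
    simp [mem_cutsF_nil]
  | cons t ts ih =>
    obtain ⟨l⟩ := t
    intro Y c
    constructor
    · intro hc
      obtain ⟨c0, cs, rfl, h0, hcs⟩ := mem_cutsF_cons.mp hc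
      obtain ⟨c1, hc1, c2, hc2, rfl⟩ := (ih Y).mp hcs
      exact ⟨c0 :: c1, mem_cutsF_cons.mpr ⟨c0, c1, rfl, h0, hc1⟩, c2, hc2, rfl⟩
    · rintro ⟨c1, hc1, c2, hc2, rfl⟩
      obtain ⟨c0, cs, rfl, h0, hcs⟩ := mem_cutsF_cons.mp hc1
      exact mem_cutsF_cons.mpr ⟨c0, cs ++ c2, rfl, h0, (ih Y).mpr ⟨cs, hcs, c2, hc2, rfl⟩⟩

lemma Pcut_append : ∀ {X : List RTree} (Y : List RTree) {c1 : List CutShape}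
    (c2 : List CutShape), c1.length = X.length →
    Pcut (X ++ Y) (c1 ++ c2) = Pcut X c1 ++ Pcut Y c2 := by
  intro X
  induction X with
  | nil =>
    intro Y c1 c2 h
    rw [List.length_nil, List.length_eq_zero_iff] at h
    subst h
    simp [Pcut_nil]
  | cons t ts ih =>
    obtain ⟨l⟩ := t
    intro Y c1 c2 h
    cases c1 with
    | nil => simp at h
    | cons c0 cs =>
      simp only [List.length_cons, Nat.add_left_inj] at h
      cases c0 with
      | full =>
        simp only [List.cons_append, Pcut_full, ih Y c2 h]
      | branch ds =>
        simp only [List.cons_append, Pcut_branch, ih Y c2 h, List.append_assoc]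

/-! ### Composition of cuts -/

lemma exists_cut_of_cut_of_Pcut : ∀ (n : ℕ) (F : List RTree), sizeL F ≤ n →
    ∀ c ∈ cutsF F, ∀ d ∈ cutsF (Pcut F c),
      ∃ e ∈ cutsF F, Pcut F e = Pcut (Pcut F c) d := by
  intro n
  induction n with
  | zero =>
    intro F hF c hc d hd
    cases F with
    | nil =>
      obtain rfl := mem_cutsF_nil.mp hc
      rw [Pcut_nil, mem_cutsF_nil] at hd
      subst hd
      exact ⟨[], mem_cutsF_nil.mpr rfl, by simp [Pcut_nil]⟩
    | cons t ts =>
      obtain ⟨l⟩ := t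
      rw [sizeL_cons] at hF
      omega
  | succ n ih =>
    intro F hF c hc d hd
    cases F with
    | nil =>
      obtain rfl := mem_cutsF_nil.mp hc
      rw [Pcut_nil, mem_cutsF_nil] at hd
      subst hd
      exact ⟨[], mem_cutsF_nil.mpr rfl, by simp [Pcut_nil]⟩
    | cons t ts =>
      obtain ⟨l⟩ := t
      rw [sizeL_cons] at hF
      have hl : sizeL l ≤ n := by omega
      have hts : sizeL ts ≤ n := by omega
      obtain ⟨c0, cs, rfl, h0, hcs⟩ := mem_cutsF_cons.mp hc
      rcases h0 with rfl | ⟨ds, hds, rfl⟩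
      · -- c0 = full : Pcut F c = node l :: Pcut ts cs
        rw [Pcut_full] at hd
        obtain ⟨d0, dss, rfl, hd0, hdss⟩ := mem_cutsF_cons.mp hd
        obtain ⟨e2, he2, hPe2⟩ := ih ts hts cs hcs dss hdss
        rcases hd0 with rfl | ⟨bs, hbs, rfl⟩
        · refine ⟨CutShape.full :: e2,
            mem_cutsF_cons.mpr ⟨_, _, rfl, Or.inl rfl, he2⟩, ?_⟩
          simp only [Pcut_full, Pcut_branch]
          rw [hPe2]
        · refine ⟨CutShape.branch bs :: e2,
            mem_cutsF_cons.mpr ⟨_, _, rfl, Or.inr ⟨bs, hbs, rfl⟩, he2⟩, ?_⟩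
          simp only [Pcut_full, Pcut_branch]
          rw [hPe2]
      · -- c0 = branch ds : Pcut F c = Pcut l ds ++ Pcut ts cs
        rw [Pcut_branch] at hd
        obtain ⟨d1, hd1, d2, hd2, rfl⟩ := (mem_cutsF_append _).mp hd
        obtain ⟨e1, he1, hPe1⟩ := ih l hl ds hds d1 hd1
        obtain ⟨e2, he2, hPe2⟩ := ih ts hts cs hcs d2 hd2
        refine ⟨CutShape.branch e1 :: e2,
          mem_cutsF_cons.mpr ⟨_, _, rfl, Or.inr ⟨e1, he1, rfl⟩, he2⟩, ?_⟩
        have hlen : d1.length = (Pcut l ds).length := length_of_mem_cutsF hd1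
        simp only [Pcut_branch]
        rw [Pcut_append _ _ hlen, hPe1, hPe2]

/-! ### Classes -/

lemma clF_cons (t : RTree) (F : List RTree) : clF (t :: F) = clT t ::ₘ clF F := rfl

lemma clF_append (F G : List RTree) : clF (F ++ G) = clF F + clF G := by
  simp [clF]

lemma clF_perm {F G : List RTree} (h : F.Perm G) : clF F = clF G :=
  Multiset.coe_eq_coe.mpr (h.map clT)

def childrenF : RTree → List RTree
  | .node l => l

lemma forall₂_iso_clF : ∀ {a b : List RTree}, List.Forall₂ Iso a b → clF a = clF b := by
  intro a b h
  induction h with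
  | nil => rfl
  | cons hab _ ih =>
    rw [clF_cons, clF_cons, ih]
    have : clT _ = clT _ := Quot.sound hab
    rw [this]

lemma iso_clF_children {t u : RTree} (h : Iso t u) :
    clF (childrenF t) = clF (childrenF u) := by
  cases h with
  | node h₁ h₂ => exact (forall₂_iso_clF h₁).trans (clF_perm h₂)

lemma clT_node_inj {l l' : List RTree}
    (h : clT (RTree.node l) = clT (RTree.node l')) : clF l = clF l' :=
  congrArg (Quot.lift (fun t => clF (childrenF t)) fun _ _ hab => iso_clF_children hab) h

open Relation in
lemma clF_eq_decomp {F G : List RTree} (h : clF F = clF G) :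
    ∃ X, F.Perm X ∧ List.Forall₂ (fun x g => clT x = clT g) X G := by
  have hperm : (F.map clT).Perm (G.map clT) := Multiset.coe_eq_coe.mp h
  have h1 : List.Forall₂ (fun a b => clT a = b) F (F.map clT) :=
    List.forall₂_map_right_iff.mpr (List.forall₂_same.mpr fun _ _ => rfl)
  have h2 : Relation.Comp (List.Forall₂ (fun a b => clT a = b)) List.Perm F (G.map clT) :=
    ⟨F.map clT, h1, hperm⟩
  rw [List.forall₂_comp_perm_eq_perm_comp_forall₂] at h2
  obtain ⟨X, hFX, hXG⟩ := h2
  exact ⟨X, hFX, List.forall₂_map_right_iff.mp hXG⟩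

/-! ### Transport of cuts along permutations and isomorphisms -/

lemma sizeL_perm {X Y : List RTree} (h : X.Perm Y) : sizeL X = sizeL Y := by
  induction h with
  | nil => rfl
  | cons x _ ih => obtain ⟨l⟩ := x; rw [sizeL_cons, sizeL_cons, ih]
  | swap x y L =>
    obtain ⟨a⟩ := x; obtain ⟨b⟩ := y
    rw [sizeL_cons, sizeL_cons, sizeL_cons, sizeL_cons]
    omega
  | trans _ _ ih₁ ih₂ => exact ih₁.trans ih₂

lemma cut_transport_perm : ∀ {F G : List RTree}, F.Perm G →
    ∀ c ∈ cutsF G, ∃ c' ∈ cutsF F, (Pcut F c').Perm (Pcut G c) := by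
  intro F G h
  induction h with
  | nil =>
    intro c hc
    obtain rfl := mem_cutsF_nil.mp hc
    exact ⟨[], mem_cutsF_nil.mpr rfl, List.Perm.refl _⟩
  | cons x p ih =>
    obtain ⟨l⟩ := x
    intro c hc
    obtain ⟨c0, cs, rfl, h0, hcs⟩ := mem_cutsF_cons.mp hc
    obtain ⟨cs', hcs', hp⟩ := ih cs hcs
    refine ⟨c0 :: cs', mem_cutsF_cons.mpr ⟨_, _, rfl, h0, hcs'⟩, ?_⟩
    rcases h0 with rfl | ⟨ds, hds, rfl⟩
    · rw [Pcut_full, Pcut_full]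
      exact hp.cons _
    · rw [Pcut_branch, Pcut_branch]
      exact hp.append_left _
  | swap x y L =>
    obtain ⟨a⟩ := x; obtain ⟨b⟩ := y
    intro c hc
    obtain ⟨c0, cs₁, rfl, h0, hcs₁⟩ := mem_cutsF_cons.mp hc
    obtain ⟨c1, cs, rfl, h1, hcs⟩ := mem_cutsF_cons.mp hcs₁
    refine ⟨c1 :: c0 :: cs, mem_cutsF_cons.mpr ⟨_, _, rfl, h1,
      mem_cutsF_cons.mpr ⟨_, _, rfl, h0, hcs⟩⟩, ?_⟩
    rcases h0 with rfl | ⟨ds, hds, rfl⟩ <;> rcases h1 with rfl | ⟨es, hes, rfl⟩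
    · rw [Pcut_full, Pcut_full, Pcut_full, Pcut_full]
      exact List.Perm.swap _ _ _
    · rw [Pcut_branch, Pcut_full, Pcut_full, Pcut_branch]
      exact List.perm_middle
    · rw [Pcut_full, Pcut_branch, Pcut_branch, Pcut_full]
      exact List.perm_middle.symm
    · rw [Pcut_branch, Pcut_branch, Pcut_branch, Pcut_branch,
        ← List.append_assoc, ← List.append_assoc]
      exact List.perm_append_comm.append_right _
  | trans p₁ p₂ ih₁ ih₂ =>
    intro c hc
    obtain ⟨c₂, hc₂, hp₂⟩ := ih₂ c hc
    obtain ⟨c₁, hc₁, hp₁⟩ := ih₁ c₂ hc₂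
    exact ⟨c₁, hc₁, hp₁.trans hp₂⟩

lemma cut_transport : ∀ (n : ℕ) (F G : List RTree), sizeL F ≤ n → clF F = clF G →
    ∀ c ∈ cutsF G, ∃ c' ∈ cutsF F, clF (Pcut F c') = clF (Pcut G c) := by
  intro n
  induction n with
  | zero =>
    intro F G hn h c hc
    cases F with
    | nil =>
      cases G with
      | nil =>
        obtain rfl := mem_cutsF_nil.mp hc
        exact ⟨[], mem_cutsF_nil.mpr rfl, rfl⟩
      | cons g Gs =>
        exfalso
        have := congrArg Multiset.card h
        simp [clF] at this
    | cons t ts =>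
      obtain ⟨l⟩ := t
      rw [sizeL_cons] at hn
      omega
  | succ n ih =>
    intro F G hn h c hc
    obtain ⟨X, hFX, hXG⟩ := clF_eq_decomp h
    have hsX : sizeL X ≤ n + 1 := by rw [← sizeL_perm hFX]; exact hn
    have key : ∀ (X G : List RTree), sizeL X ≤ n + 1 →
        List.Forall₂ (fun x g => clT x = clT g) X G →
        ∀ c ∈ cutsF G, ∃ c₁ ∈ cutsF X, clF (Pcut X c₁) = clF (Pcut G c) := by
      intro X
      induction X with
      | nil =>
        intro G _ hXG c hc
        cases hXG
        obtain rfl := mem_cutsF_nil.mp hc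
        exact ⟨[], mem_cutsF_nil.mpr rfl, rfl⟩
      | cons x Xs ihX =>
        intro G hszX hXG c hc
        obtain ⟨l⟩ := x
        cases hXG with
        | cons hxg hXs =>
          rename_i g Gs
          obtain ⟨l'⟩ := g
          rw [sizeL_cons] at hszX
          obtain ⟨c0, cs, rfl, h0, hcs⟩ := mem_cutsF_cons.mp hc
          obtain ⟨cs', hcs', hPcs⟩ := ihX Gs (by omega) hXs cs hcs
          rcases h0 with rfl | ⟨ds, hds, rfl⟩
          · refine ⟨CutShape.full :: cs',
              mem_cutsF_cons.mpr ⟨_, _, rfl, Or.inl rfl, hcs'⟩, ?_⟩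
            rw [Pcut_full, Pcut_full, clF_cons, clF_cons, hPcs, hxg]
          · have hchild : clF l = clF l' := clT_node_inj hxg
            obtain ⟨ds', hds', hPds⟩ := ih l l' (by omega) hchild ds hds
            refine ⟨CutShape.branch ds' :: cs',
              mem_cutsF_cons.mpr ⟨_, _, rfl, Or.inr ⟨ds', hds', rfl⟩, hcs'⟩, ?_⟩
            rw [Pcut_branch, Pcut_branch, clF_append, clF_append, hPds, hPcs]
    obtain ⟨c₁, hc₁, hP₁⟩ := key X G hsX hXG c hc
    obtain ⟨c', hc', hP'⟩ := cut_transport_perm hFX c₁ hc₁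
    exact ⟨c', hc', (clF_perm hP').trans hP₁⟩
lemma clF_repF (N : ForestClass) : clF (repF N) = N := by
  simp only [clF, repF, List.map_map]
  rw [show clT ∘ (Quot.out : TreeClass → RTree) = id from funext fun t => Quot.out_eq t]
  simp

/-- Main transport lemma: a cut of a representative of the class of a pruned
part corresponds to a cut of the original forest. -/
lemma exists_cut_of_rep {R : List RTree} {c : List CutShape} (hc : c ∈ cutsF R)
    {c' : List CutShape} (hc' : c' ∈ cutsF (repF (clF (Pcut R c)))) :
    ∃ e ∈ cutsF R, clF (Pcut R e) = clF (Pcut (repF (clF (Pcut R c))) c') := by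
  have hcl : clF (Pcut R c) = clF (repF (clF (Pcut R c))) := (clF_repF _).symm
  obtain ⟨d, hd, hPd⟩ := cut_transport (sizeL (Pcut R c)) _ _ le_rfl hcl c' hc'
  obtain ⟨e, he, hPe⟩ := exists_cut_of_cut_of_Pcut (sizeL R) R le_rfl c hc d hd
  exact ⟨e, he, by rw [hPe, hPd]⟩

/-- STATEMENT 16: for every rooted forest `M`, the subspace `H_≤M` is
finite-dimensional of dimension at most the number of admissible cuts of `M`,
and is stable under every top-elimination operator `E^top_A`.  Hence it is a
finite-dimensional representation of `n_T` under top elimination. -/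
theorem Hle_findim_stable (M : ForestClass) :
    FiniteDimensional ℚ (Hle M) ∧
    Module.finrank ℚ (Hle M) ≤ (cutsF (repF M)).length ∧
    ∀ A : ForestClass, ∀ w ∈ Hle M, topElim A w ∈ Hle M := by
  classical
  set R := repF M with hR
  set gens : List H := (cutsF R).map (fun c => delta (clF (Pcut R c))) with hgens
  have hset : {v : H | ∃ c ∈ cutsF R, v = delta (clF (Pcut R c))}
      = (gens.toFinset : Set H) := by
    ext v
    simp only [hgens, Set.mem_setOf_eq, List.coe_toFinset, Set.mem_setOf_eq,
      List.mem_map]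
    constructor
    · rintro ⟨c, hc, rfl⟩; exact ⟨c, hc, rfl⟩
    · rintro ⟨c, hc, rfl⟩; exact ⟨c, hc, rfl⟩
  have hHle : Hle M = Submodule.span ℚ (gens.toFinset : Set H) := by
    rw [Hle, hset]
  refine ⟨?_, ?_, ?_⟩
  · rw [hHle]; infer_instance
  · rw [hHle]
    calc Module.finrank ℚ (Submodule.span ℚ (gens.toFinset : Set H))
        ≤ gens.toFinset.card := by
          simpa [Set.finrank] using finrank_span_finset_le_card (R := ℚ) gens.toFinset
      _ ≤ gens.length := gens.toFinset_card_le
      _ = (cutsF R).length := by rw [hgens, List.length_map]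
  · intro A w hw
    have hstab : Hle M ≤ Submodule.comap (topElim A) (Hle M) := by
      rw [Hle]
      apply Submodule.span_le.mpr
      rintro v ⟨c, hc, rfl⟩
      simp only [SetLike.mem_coe, Submodule.mem_comap]
      have hcomp : topElim A (delta (clF (Pcut R c)))
          = topElimBasis A (clF (Pcut R c)) := by
        simp [topElim, delta, Finsupp.lsum_single, LinearMap.toSpanSingleton_apply]
      rw [hcomp, topElimBasis]
      apply list_sum_mem
      intro x hx
      obtain ⟨c', hc', rfl⟩ := List.mem_map.mp hx
      have hc'' : c' ∈ cutsF (repF (clF (Pcut R c))) := (List.mem_filter.mp hc').1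
      obtain ⟨e, he, hPe⟩ := exists_cut_of_rep hc hc''
      exact Submodule.subset_span ⟨e, he, by rw [hPe]⟩
    exact hstab hw

end CK
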